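/- Let X be a T₀ space, U an SI₂-open set, x ∈ X, and ℱ = {↑F : F nonempty finite ⊆ X} an irreducible subset of the Smyth power space P_S(X). If ⋂ℱ ⊆ ↑x ⊆ U, then ↑F ⊆ U for some ↑F ∈ ℱ. -/

import Mathlib

open Set

/-- Specialization order: `x ≤ y` iff `x ∈ cl {y}`. -/
def specLE {X : Type} [TopologicalSpace X] (x y : X) : Prop := x ∈ closure {y}

/-- Upward closure w.r.t. the specialization order. -/
def upClosure {X : Type} [TopologicalSpace X] (A : Set X) : Set X :=
  {y | ∃ a ∈ A, specLE a y}

/-- The underlying set of the Smyth power space: nonempty compact saturated subsets. -/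
def SmythPS (X : Type) [TopologicalSpace X] : Type :=
  {K : Set X // K.Nonempty ∧ IsCompact K ∧ ∀ x ∈ K, ∀ y, specLE x y → y ∈ K}

/-- `□U = {K ∈ Q(X) : K ⊆ U}`. -/
def boxU {X : Type} [TopologicalSpace X] (U : Set X) : Set (SmythPS X) :=
  {K : SmythPS X | K.1 ⊆ U}

/-- The upper Vietoris topology on the Smyth power space. -/
instance smythTop (X : Type) [TopologicalSpace X] : TopologicalSpace (SmythPS X) :=
  TopologicalSpace.generateFrom {S : Set (SmythPS X) | ∃ U : Set X, IsOpen U ∧ S = boxU U}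

/-- The cut `A^δ = (A^↑)^↓` w.r.t. the specialization order. -/
def cutD {X : Type} [TopologicalSpace X] (A : Set X) : Set X :=
  {x | ∀ u : X, (∀ a ∈ A, specLE a u) → specLE x u}

/-- `U` is SI₂-open. -/
def SI2Open {X : Type} [TopologicalSpace X] (U : Set X) : Prop :=
  IsOpen U ∧ ∀ F : Set X, IsIrreducible F → (cutD F ∩ U).Nonempty → (F ∩ U).Nonempty

/-- `le` makes `I` the index of a net: nonempty, reflexive, transitive, directed. -/
def IsNetOrder {I : Type} (le : I → I → Prop) : Prop :=
  Nonempty I ∧ (∀ i, le i i) ∧ (∀ i j k, le i j → le j k → le i k) ∧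
    (∀ i j, ∃ k, le i k ∧ le j k)

/-- GSI₂-convergence of the net `xi` (indexed by `(I, le)`) to `x`. -/
def GSI2Conv {X : Type} [TopologicalSpace X] {I : Type} (le : I → I → Prop)
    (xi : I → X) (x : X) : Prop :=
  ∃ 𝒢 : Set (Set X), (∀ G ∈ 𝒢, G.Finite ∧ G.Nonempty) ∧
    IsIrreducible {K : SmythPS X | ∃ G ∈ 𝒢, K.1 = upClosure G} ∧
    (∀ U : Set X, IsOpen U → (∃ G ∈ 𝒢, upClosure G ⊆ U) →
      ∃ i₀, ∀ i, le i₀ i → xi i ∈ U) ∧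
    (⋂ G ∈ 𝒢, upClosure G) ⊆ upClosure {x}

/-- `A ≪_{I₂} B`. -/
def WayBelowI2 {X : Type} [TopologicalSpace X] (A B : Set X) : Prop :=
  ∀ D : Set X, IsIrreducible D → (cutD D ∩ B).Nonempty → (A ∩ closure D).Nonempty

/-- `w(x) = {↑F : F nonempty finite, F ≪_{I₂} x}` as a subset of the Smyth power space. -/
def wPS {X : Type} [TopologicalSpace X] (x : X) : Set (SmythPS X) :=
  {K : SmythPS X | ∃ F : Set X, F.Finite ∧ F.Nonempty ∧ WayBelowI2 F {x} ∧ K.1 = upClosure F}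

/-- QI₂-continuity. -/
def QI2Continuous (X : Type) [TopologicalSpace X] : Prop :=
  ∀ x : X, IsIrreducible (wPS x) ∧ upClosure {x} = ⋂ K ∈ wPS x, (K.1 : Set X)

/-- Strong QI₂-continuity. -/
def StronglyQI2Continuous (X : Type) [TopologicalSpace X] : Prop :=
  QI2Continuous X ∧
  ∀ (F : Set X) (x : X) (U : Set X), F.Finite → F.Nonempty → WayBelowI2 F {x} →
    IsOpen U → F ⊆ U → ∃ W : Set X, SI2Open W ∧ x ∈ W ∧ W ⊆ U

theorem stmt11 {X : Type} [TopologicalSpace X] [T0Space X] (U : Set X)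
    (hU : SI2Open U) (x : X) (ℱ : Set (SmythPS X))
    (hfin : ∀ K ∈ ℱ, ∃ F : Set X, F.Finite ∧ F.Nonempty ∧ K.1 = upClosure F)
    (hirr : IsIrreducible ℱ)
    (hsub : (⋂ K ∈ ℱ, (K.1 : Set X)) ⊆ upClosure {x})
    (hxU : upClosure {x} ⊆ U) :
    ∃ K ∈ ℱ, K.1 ⊆ U := by
  by_contra hcon
  push_neg at hcon
  have hbox : ∀ W : Set X, IsOpen W → IsOpen (boxU W) := fun W hW =>
    TopologicalSpace.GenerateOpen.basic _ ⟨W, hW, rfl⟩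
  -- the family of closed subsets of Uᶜ meeting every member of ℱ
  set S : Set (Set X) := {C | IsClosed C ∧ C ⊆ Uᶜ ∧ ∀ K ∈ ℱ, (K.1 ∩ C).Nonempty} with hS
  have hUc : Uᶜ ∈ S := by
    refine ⟨hU.1.isClosed_compl, le_refl _, fun K hK => ?_⟩
    rcases not_subset.1 (hcon K hK) with ⟨a, haK, haU⟩
    exact ⟨a, haK, haU⟩
  obtain ⟨A, -, hAS, hAmin⟩ : ∃ m, m ⊆ Uᶜ ∧ Minimal (· ∈ S) m := by
    apply zorn_superset_nonempty S ?_ _ hUc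
    intro c hcS hchain hcne
    refine ⟨⋂₀ c, ⟨isClosed_sInter fun C hC => (hcS hC).1,
      (sInter_subset_of_mem hcne.choose_spec).trans (hcS hcne.choose_spec).2.1,
      fun K hK => ?_⟩, fun s hs => sInter_subset_of_mem hs⟩
    -- K.1 meets ⋂₀ c, by compactness of K
    by_contra hempty
    rw [Set.not_nonempty_iff_eq_empty, sInter_eq_iInter] at hempty
    obtain ⟨t, ht⟩ := K.2.2.1.elim_finite_subfamily_closed
      (fun C : c => (C : Set X)) (fun C => (hcS C.2).1) hempty
    rcases t.eq_empty_or_nonempty with rfl | htne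
    · obtain ⟨a, ha⟩ := K.2.1
      have : a ∈ K.1 ∩ ⋂ C ∈ (∅ : Finset c), (C : Set X) :=
        ⟨ha, Set.mem_iInter₂.2 fun C hC => absurd hC (Finset.notMem_empty C)⟩
      rw [ht] at this
      exact this
    · -- a finite nonempty chain has a least element
      obtain ⟨C₀, hC₀t, hC₀min⟩ := t.exists_minimal htne
      have hleast : ∀ C ∈ t, (C₀ : Set X) ⊆ (C : Set X) := by
        intro C hCt
        rcases eq_or_ne C C₀ with rfl | hne
        · exact subset_rfl
        · rcases hchain.total C₀.2 C.2 with h | h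
          · exact h
          · have : ¬ C < C₀ := fun hlt => lt_irrefl C (lt_of_lt_of_le hlt (hC₀min hCt hlt.le))
            have : C = C₀ := le_antisymm h (by
              by_contra hlt
              exact this (lt_of_le_of_ne h hne))
            exact (hne this).elim
      have hsub0 : (C₀ : Set X) ⊆ ⋂ C ∈ t, (C : Set X) :=
        Set.subset_iInter₂ fun C hC => hleast C hC
      have hKC₀ : (K.1 ∩ (C₀ : Set X)).Nonempty := (hcS C₀.2).2.2 K hK
      rcases hKC₀ with ⟨a, haK, haC⟩
      have : a ∈ K.1 ∩ ⋂ C ∈ t, (C : Set X) := ⟨haK, hsub0 haC⟩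
      rw [ht] at this
      exact this
  obtain ⟨hAcl, hAU, hAmeets⟩ := hAS
  -- A is irreducible
  have hAne : A.Nonempty := by
    obtain ⟨K₀, hK₀⟩ := hirr.1
    obtain ⟨a, -, ha⟩ := hAmeets K₀ hK₀
    exact ⟨a, ha⟩
  have hAirr : IsIrreducible A := by
    refine ⟨hAne, fun V₁ V₂ hV₁ hV₂ ⟨a₁, ha₁⟩ ⟨a₂, ha₂⟩ => ?_⟩
    -- A \ Vᵢ is a proper closed subset of A, hence misses some Kᵢ ∈ ℱ
    have key : ∀ (V : Set X), IsOpen V → (A ∩ V).Nonempty →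
        ∃ K ∈ ℱ, K.1 ⊆ (A \ V)ᶜ := by
      intro V hV ⟨a, haA, haV⟩
      by_contra hbad
      push_neg at hbad
      have hmem : A \ V ∈ S := by
        refine ⟨hAcl.sdiff hV, (Set.diff_subset).trans hAU, fun K hK => ?_⟩
        rcases not_subset.1 (hbad K hK) with ⟨b, hbK, hb⟩
        rw [Set.mem_compl_iff, not_not] at hb
        exact ⟨b, hbK, hb⟩
      have : A ⊆ A \ V := hAmin hmem Set.diff_subset
      exact (this haA).2 haV
    obtain ⟨K₁, hK₁ℱ, hK₁⟩ := key V₁ hV₁ ⟨a₁, ha₁⟩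
    obtain ⟨K₂, hK₂ℱ, hK₂⟩ := key V₂ hV₂ ⟨a₂, ha₂⟩
    have hdir := hirr.2 (boxU (A \ V₁)ᶜ) (boxU (A \ V₂)ᶜ)
      (hbox _ (hAcl.sdiff hV₁).isOpen_compl) (hbox _ (hAcl.sdiff hV₂).isOpen_compl)
      ⟨K₁, hK₁ℱ, hK₁⟩ ⟨K₂, hK₂ℱ, hK₂⟩
    obtain ⟨K, hKℱ, hKb₁, hKb₂⟩ := hdir
    obtain ⟨a, haK, haA⟩ := hAmeets K hKℱ
    have h₁ : a ∉ A \ V₁ := hKb₁ haK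
    have h₂ : a ∉ A \ V₂ := hKb₂ haK
    refine ⟨a, haA, ?_, ?_⟩
    · by_contra h; exact h₁ ⟨haA, h⟩
    · by_contra h; exact h₂ ⟨haA, h⟩
  -- x ∈ cutD A ∩ U
  have hxx : x ∈ upClosure ({x} : Set X) :=
    ⟨x, rfl, subset_closure rfl⟩
  have hxcut : x ∈ cutD A := by
    intro u hu
    have huall : u ∈ ⋂ K ∈ ℱ, (K.1 : Set X) := by
      refine Set.mem_iInter₂.2 fun K hK => ?_
      obtain ⟨a, haK, haA⟩ := hAmeets K hK
      exact K.2.2.2 a haK u (hu a haA)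
    obtain ⟨y, hy, hyu⟩ := hsub huall
    rw [Set.mem_singleton_iff] at hy
    rwa [hy] at hyu
  have := hU.2 A hAirr ⟨x, hxcut, hxU hxx⟩
  obtain ⟨a, haA, haU⟩ := this
  exact hAU haA haU
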